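/- If a > 0 satisfies a^k = 1 + a + a² + ... + a^{k-1} for some integer k ≥ 1, then for all x > a, x^k > 1 + x + x² + ... + x^{k-1}. -/
import Mathlib


theorem growth_beyond_root (k : ℕ) (hk : 1 ≤ k) (a : ℝ) (ha : 0 < a)
    (hroot : a ^ k = ∑ i ∈ Finset.range k, a ^ i) :
    ∀ x : ℝ, a < x → (∑ i ∈ Finset.range k, x ^ i) < x ^ k := by
  intro x hx
  have hx0 : 0 < x := ha.trans hx
  have hak : 0 < a ^ k := pow_pos ha k
  have key : (∑ i ∈ Finset.range k, x ^ i) * a ^ k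
      < (∑ i ∈ Finset.range k, a ^ i) * x ^ k := by
    rw [Finset.sum_mul, Finset.sum_mul]
    apply Finset.sum_lt_sum_of_nonempty (Finset.nonempty_range_iff.mpr (by omega))
    intro i hi
    have hik : i < k := Finset.mem_range.mp hi
    have h1 : a ^ (k - i) < x ^ (k - i) :=
      pow_lt_pow_left₀ hx ha.le (by omega)
    calc x ^ i * a ^ k = (x ^ i * a ^ i) * a ^ (k - i) := by
          rw [mul_assoc, ← pow_add]; congr 2; omega
      _ < (x ^ i * a ^ i) * x ^ (k - i) :=
          mul_lt_mul_of_pos_left h1 (by positivity)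
      _ = a ^ i * x ^ k := by
          rw [mul_comm (x ^ i) (a ^ i), mul_assoc, ← pow_add]
          congr 2; omega
  rw [← hroot, mul_comm (a ^ k) (x ^ k)] at key
  exact lt_of_mul_lt_mul_right key hak.le
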